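/- Let (Ω,d) be a bounded minimally nice metric space whose metric completion Ω̄^d is compact, and suppose (Ω,d) is quasihyperbolically visible. If γ : [0,∞) → (Ω,k_Ω) is a quasihyperbolic geodesic ray, then for every sequence t_n → ∞ the limit lim_{n→∞} γ(t_n) exists in the metric d (and lies in ∂_dΩ). -/

import Mathlib

open Set Filter Metric Topology UniformConvergence ENNReal

noncomputable section

variable {Ω : Type*} [MetricSpace Ω]

/-- The metric boundary `∂_dΩ` of a metric space `Ω`: the complement of (the image of) `Ω`
in its metric completion `Ω̄^d`. -/
def metricBoundary (Ω : Type*) [MetricSpace Ω] : Set (UniformSpace.Completion Ω) :=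
  (Set.range ((↑) : Ω → UniformSpace.Completion Ω))ᶜ

/-- `δ_Ω(z)`: the distance from `z ∈ Ω` to the metric boundary `∂_dΩ`. -/
def deltaOmega (z : Ω) : ℝ :=
  Metric.infDist ((z : UniformSpace.Completion Ω)) (metricBoundary Ω)

/-- A rectifiable curve in `Ω`, defined on `[a,b]`, joining `x` to `y`. -/
def IsCurveIn (γ : ℝ → Ω) (a b : ℝ) (x y : Ω) : Prop :=
  a ≤ b ∧ ContinuousOn γ (Set.Icc a b) ∧ γ a = x ∧ γ b = y ∧
    eVariationOn γ (Set.Icc a b) ≠ ⊤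

/-- The `d`-arclength function `t ↦ ℓ_d(γ|_{[a,t]})` of a curve `γ` on `[a,b]` (clamped). -/
def arcLengthFun (γ : ℝ → Ω) (a b : ℝ) : ℝ → ℝ :=
  fun t => (eVariationOn γ (Set.Icc a (max a (min t b)))).toReal

theorem arcLengthFun_monotone {γ : ℝ → Ω} {a b : ℝ} (hab : a ≤ b)
    (hrect : eVariationOn γ (Set.Icc a b) ≠ ⊤) : Monotone (arcLengthFun γ a b) := by
  intro s t hst
  apply ENNReal.toReal_mono
  · exact ne_top_of_le_ne_top hrect
      (eVariationOn.mono γ (Set.Icc_subset_Icc_right (max_le hab (min_le_right _ _))))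
  · exact eVariationOn.mono γ (Set.Icc_subset_Icc_right
      (max_le_max le_rfl (min_le_min hst le_rfl)))

/-- The quasihyperbolic length `ℓ_k(γ) = ∫_γ |dz| / δ_Ω(z)` of a rectifiable curve
`γ : [a,b] → Ω`: the Lebesgue–Stieltjes integral of `1/δ_Ω(γ(t))` with respect to the
arclength function of `γ`.  (Non-rectifiable "curves" get length `⊤`.) -/
def qhLength (γ : ℝ → Ω) (a b : ℝ) : ℝ≥0∞ :=
  if h : a ≤ b ∧ eVariationOn γ (Set.Icc a b) ≠ ⊤ then
    ∫⁻ t in Set.Icc a b, ENNReal.ofReal (1 / deltaOmega (γ t))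
      ∂(arcLengthFun_monotone h.1 h.2).stieltjesFunction.measure
  else ⊤

/-- The quasihyperbolic distance (as an extended real): the infimum of the quasihyperbolic
lengths of rectifiable curves in `Ω` joining `x` to `y`. -/
def qhEDist (x y : Ω) : ℝ≥0∞ :=
  ⨅ (γ : ℝ → Ω) (a : ℝ) (b : ℝ) (_ : IsCurveIn γ a b x y), qhLength γ a b

/-- The quasihyperbolic metric `k_Ω`. -/
def qhDist (x y : Ω) : ℝ :=
  (qhEDist x y).toReal

/-- The inner (length) metric `λ_Ω` associated to `(Ω,d)`, as an extended real. -/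
def innerEDist (x y : Ω) : ℝ≥0∞ :=
  ⨅ (γ : ℝ → Ω) (a : ℝ) (b : ℝ) (_ : IsCurveIn γ a b x y), eVariationOn γ (Set.Icc a b)

/-- `(Ω,d)` is minimally nice: rectifiably connected, locally compact, non-complete, and the
identity map from `(Ω,d)` to `(Ω,λ_Ω)` is continuous. -/
structure MinimallyNice (Ω : Type*) [MetricSpace Ω] : Prop where
  rectifiablyConnected : ∀ x y : Ω, ∃ (γ : ℝ → Ω) (a b : ℝ), IsCurveIn γ a b x y
  locallyCompact : LocallyCompactSpace Ω
  nonComplete : ¬ CompleteSpace Ω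
  idContinuous : ∀ x : Ω, Filter.Tendsto (fun y => innerEDist x y) (nhds x) (nhds 0)

/-- `γ` is a geodesic of the quasihyperbolic metric on the parameter set `s`
(parametrized by `k_Ω`-arclength). -/
def IsQHGeodesicOn (γ : ℝ → Ω) (s : Set ℝ) : Prop :=
  ∀ ⦃u⦄, u ∈ s → ∀ ⦃v⦄, v ∈ s → qhDist (γ u) (γ v) = |u - v|

/-- A quasihyperbolic geodesic segment from `x` to `y`. -/
def IsQHGeodesicSeg (γ : ℝ → Ω) (a b : ℝ) (x y : Ω) : Prop :=
  a ≤ b ∧ γ a = x ∧ γ b = y ∧ IsQHGeodesicOn γ (Set.Icc a b)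

/-- A quasihyperbolic geodesic ray `γ : [0,∞) → (Ω, k_Ω)`. -/
def IsQHGeodesicRay (γ : ℝ → Ω) : Prop :=
  IsQHGeodesicOn γ (Set.Ici 0)

/-- A quasihyperbolic geodesic line `γ : (-∞,∞) → (Ω, k_Ω)`. -/
def IsQHGeodesicLine (γ : ℝ → Ω) : Prop :=
  IsQHGeodesicOn γ Set.univ

/-- `(Ω,d)` is quasihyperbolically visible: for every pair of distinct points `p,q` of the
metric boundary there is a compact set `K ⊆ Ω` such that for all sequences `xₙ → p`, `yₙ → q`
(in the metric `d`), every quasihyperbolic geodesic joining `xₙ` and `yₙ` meets `K`. -/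
def QHVisible (Ω : Type*) [MetricSpace Ω] : Prop :=
  ∀ p q : UniformSpace.Completion Ω, p ∈ metricBoundary Ω → q ∈ metricBoundary Ω → p ≠ q →
    ∃ K : Set Ω, IsCompact K ∧
      ∀ x y : ℕ → Ω,
        Filter.Tendsto (fun n => ((x n : Ω) : UniformSpace.Completion Ω))
          Filter.atTop (nhds p) →
        Filter.Tendsto (fun n => ((y n : Ω) : UniformSpace.Completion Ω))
          Filter.atTop (nhds q) →
        ∀ (n : ℕ) (γ : ℝ → Ω) (a b : ℝ), IsQHGeodesicSeg γ a b (x n) (y n) →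
          ∃ t ∈ Set.Icc a b, γ t ∈ K

/-- `(Ω, k_Ω)` is Gromov hyperbolic: there is `δ ≥ 0` such that every quasihyperbolic
geodesic triangle is `δ`-thin. -/
def QHGromovHyperbolic (Ω : Type*) [MetricSpace Ω] : Prop :=
  ∃ δ : ℝ, 0 ≤ δ ∧
    ∀ (x y z : Ω) (γ₁ γ₂ γ₃ : ℝ → Ω) (a₁ b₁ a₂ b₂ a₃ b₃ : ℝ),
      IsQHGeodesicSeg γ₁ a₁ b₁ x y → IsQHGeodesicSeg γ₂ a₂ b₂ y z →
      IsQHGeodesicSeg γ₃ a₃ b₃ x z →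
      ∀ t ∈ Set.Icc a₁ b₁,
        ∃ u, (u ∈ Set.Icc a₂ b₂ ∧ qhDist (γ₁ t) (γ₂ u) ≤ δ) ∨
             (u ∈ Set.Icc a₃ b₃ ∧ qhDist (γ₁ t) (γ₃ u) ≤ δ)

/-- `(Ω,d)` is quasiconvex: some `A ≥ 1` so that every two points are joined by a curve of
`d`-length at most `A·d(x,y)`. -/
def QuasiconvexSpace (Ω : Type*) [MetricSpace Ω] : Prop :=
  ∃ A : ℝ, 1 ≤ A ∧ ∀ x y : Ω, ∃ (γ : ℝ → Ω) (a b : ℝ), IsCurveIn γ a b x y ∧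
    eVariationOn γ (Set.Icc a b) ≤ ENNReal.ofReal (A * dist x y)

/-- The Gehring–Hayman theorem holds in `(Ω,d)`: quasihyperbolic geodesics are essentially
the shortest curves, up to a multiplicative constant `C ≥ 1`. -/
def GehringHayman (Ω : Type*) [MetricSpace Ω] : Prop :=
  ∃ C : ℝ, 1 ≤ C ∧ ∀ x y : Ω, ∀ (γ : ℝ → Ω) (a b : ℝ), IsQHGeodesicSeg γ a b x y →
    ∀ (σ : ℝ → Ω) (a' b' : ℝ), IsCurveIn σ a' b' x y →
      eVariationOn γ (Set.Icc a b) ≤ ENNReal.ofReal C * eVariationOn σ (Set.Icc a' b')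

/-! ### Auxiliary lemmas for Lemma 4.2 -/

section Aux42

open UniformSpace

variable {Ω : Type*} [MetricSpace Ω]

lemma metricBoundary_nonempty (h : ¬ CompleteSpace Ω) : (metricBoundary Ω).Nonempty := by
  rw [Set.nonempty_iff_ne_empty]
  intro hemp
  apply h
  rw [completeSpace_iff_isComplete_range (Completion.isUniformInducing_coe Ω)]
  have hr : Set.range ((↑) : Ω → Completion Ω) = Set.univ := by
    rw [metricBoundary] at hemp
    exact Set.compl_empty_iff.mp hemp
  rw [hr]
  exact completeSpace_iff_isComplete_univ.mp inferInstance

lemma deltaOmega_pos_of_minimallyNice (hnice : MinimallyNice Ω) (z : Ω) : 0 < deltaOmega z := by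
  haveI := hnice.locallyCompact
  obtain ⟨K, hKc, hKn⟩ := exists_compact_mem_nhds z
  obtain ⟨r, hr, hball⟩ := Metric.mem_nhds_iff.mp hKn
  have hne : (metricBoundary Ω).Nonempty := metricBoundary_nonempty hnice.nonComplete
  have key : ∀ p ∈ metricBoundary Ω, r ≤ dist ((z : Completion Ω)) p := by
    intro p hp
    by_contra hlt
    push_neg at hlt
    apply hp
    show p ∈ Set.range ((↑) : Ω → Completion Ω)
    have hsub : ((↑) : Ω → Completion Ω) '' (Metric.ball z r) ⊆ ((↑) : Ω → Completion Ω) '' K :=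
      Set.image_mono hball
    have hclosed : IsClosed (((↑) : Ω → Completion Ω) '' K) :=
      (hKc.image (Completion.continuous_coe Ω)).isClosed
    have hmem : p ∈ closure (((↑) : Ω → Completion Ω) '' (Metric.ball z r)) := by
      rw [mem_closure_iff_nhds]
      intro U hU
      have hball' : Metric.ball ((z : Completion Ω)) r ∈ 𝓝 p :=
        Metric.isOpen_ball.mem_nhds (by rwa [Metric.mem_ball, dist_comm])
      obtain ⟨V, hVU, hVo, hpV⟩ := _root_.mem_nhds_iff.mp (Filter.inter_mem hU hball')
      obtain ⟨x, hx⟩ := (Completion.denseRange_coe (α := Ω)).exists_mem_open hVo ⟨p, hpV⟩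
      refine ⟨(x : Completion Ω), (hVU hx).1, ⟨x, ?_, rfl⟩⟩
      have hd : dist ((x : Completion Ω)) ((z : Completion Ω)) < r :=
        Metric.mem_ball.mp (hVU hx).2
      rw [Completion.dist_eq] at hd
      exact Metric.mem_ball.mpr hd
    have hmem2 := closure_mono hsub hmem
    rw [hclosed.closure_eq] at hmem2
    exact Set.image_subset_range _ _ hmem2
  have hle : r ≤ deltaOmega z := by
    rw [deltaOmega]
    by_contra hlt
    push_neg at hlt
    obtain ⟨p, hp, hdp⟩ := (Metric.infDist_lt_iff hne).mp hlt
    exact absurd hdp (not_lt.mpr (key p hp))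
  linarith

lemma qhEDist_le_qhLength {x y : Ω} {σ : ℝ → Ω} {a b : ℝ} (h : IsCurveIn σ a b x y) :
    qhEDist x y ≤ qhLength σ a b :=
  iInf_le_of_le σ (iInf_le_of_le a (iInf_le_of_le b (iInf_le _ h)))

lemma qhLength_le_of_delta_lb {σ : ℝ → Ω} {a b : ℝ} (hab : a ≤ b)
    (hvar : eVariationOn σ (Set.Icc a b) ≠ ⊤) {c : ℝ} (hc : 0 < c)
    (hδ : ∀ s ∈ Set.Icc a b, c ≤ deltaOmega (σ s)) :
    qhLength σ a b ≤ ENNReal.ofReal (1 / c) * eVariationOn σ (Set.Icc a b) := by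
  have hpair : a ≤ b ∧ eVariationOn σ (Set.Icc a b) ≠ ⊤ := ⟨hab, hvar⟩
  rw [qhLength, dif_pos hpair]
  have hf : Monotone (arcLengthFun σ a b) := arcLengthFun_monotone hpair.1 hpair.2
  set g := (arcLengthFun_monotone hpair.1 hpair.2).stieltjesFunction with hg
  have hmeas : g.measure (Set.Icc a b) ≤ eVariationOn σ (Set.Icc a b) := by
    rw [StieltjesFunction.measure_Icc]
    have hfb : arcLengthFun σ a b b = (eVariationOn σ (Set.Icc a b)).toReal := by
      rw [arcLengthFun, min_self, max_eq_right hab]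
    have hfb1 : arcLengthFun σ a b (b + 1) = (eVariationOn σ (Set.Icc a b)).toReal := by
      rw [arcLengthFun, min_eq_right (by linarith : b ≤ b + 1), max_eq_right hab]
    have hgb : g b = (eVariationOn σ (Set.Icc a b)).toReal := by
      rw [hg, Monotone.stieltjesFunction_eq]
      refine le_antisymm ?_ ?_
      · have h1 := hf.rightLim_le (lt_add_one b)
        rwa [hfb1] at h1
      · have h2 := hf.le_rightLim (le_refl b)
        rwa [hfb] at h2
    have hla : 0 ≤ Function.leftLim (⇑g) a := by
      have h1 : g (a - 1) ≤ Function.leftLim (⇑g) a := g.mono.le_leftLim (by linarith)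
      have h2 : (0 : ℝ) ≤ g (a - 1) := by
        rw [hg, Monotone.stieltjesFunction_eq]
        exact le_trans ENNReal.toReal_nonneg (hf.le_rightLim (le_refl (a - 1)))
      linarith
    calc ENNReal.ofReal (g b - Function.leftLim (⇑g) a)
        ≤ ENNReal.ofReal (g b) := ENNReal.ofReal_le_ofReal (by linarith)
      _ = eVariationOn σ (Set.Icc a b) := by rw [hgb, ENNReal.ofReal_toReal hvar]
  calc ∫⁻ s in Set.Icc a b, ENNReal.ofReal (1 / deltaOmega (σ s)) ∂g.measure
      ≤ ∫⁻ _ in Set.Icc a b, ENNReal.ofReal (1 / c) ∂g.measure := by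
        refine MeasureTheory.setLIntegral_mono' measurableSet_Icc fun s hs => ?_
        exact ENNReal.ofReal_le_ofReal (one_div_le_one_div_of_le hc (hδ s hs))
    _ = ENNReal.ofReal (1 / c) * g.measure (Set.Icc a b) :=
        MeasureTheory.setLIntegral_const _ _
    _ ≤ ENNReal.ofReal (1 / c) * eVariationOn σ (Set.Icc a b) := by
        gcongr

lemma exists_nhds_qhDist_le (hnice : MinimallyNice Ω) (z : Ω) :
    ∃ U ∈ 𝓝 z, ∀ y₁ ∈ U, ∀ y₂ ∈ U, qhDist y₁ y₂ ≤ 1 := by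
  have hr : 0 < deltaOmega z := deltaOmega_pos_of_minimallyNice hnice z
  set r := deltaOmega z with hrdef
  have hev : ∀ᶠ y in 𝓝 z, innerEDist z y < ENNReal.ofReal (r / 8) :=
    (hnice.idContinuous z).eventually
      (gt_mem_nhds (ENNReal.ofReal_pos.mpr (by positivity)))
  refine ⟨{y | innerEDist z y < ENNReal.ofReal (r / 8)}, hev, ?_⟩
  intro y₁ h₁ y₂ h₂
  rw [Set.mem_setOf_eq] at h₁ h₂
  obtain ⟨σ₁, a₁, b₁, hcur₁, hv₁⟩ :
      ∃ σ a b, IsCurveIn σ a b z y₁ ∧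
        eVariationOn σ (Set.Icc a b) < ENNReal.ofReal (r / 8) := by
    rw [innerEDist] at h₁
    simpa only [iInf_lt_iff, exists_prop] using h₁
  obtain ⟨σ₂, a₂, b₂, hcur₂, hv₂⟩ :
      ∃ σ a b, IsCurveIn σ a b z y₂ ∧
        eVariationOn σ (Set.Icc a b) < ENNReal.ofReal (r / 8) := by
    rw [innerEDist] at h₂
    simpa only [iInf_lt_iff, exists_prop] using h₂
  obtain ⟨hab₁, hcont₁, hA₁, hB₁, hfin₁⟩ := hcur₁
  obtain ⟨hab₂, hcont₂, hA₂, hB₂, hfin₂⟩ := hcur₂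
  set L₁ : ℝ := b₁ - a₁ with hL₁def
  set L₂ : ℝ := b₂ - a₂ with hL₂def
  set L : ℝ := L₁ + L₂ with hLdef
  have hL₁ : 0 ≤ L₁ := sub_nonneg.mpr hab₁
  have hL₂ : 0 ≤ L₂ := sub_nonneg.mpr hab₂
  have hL₁L : L₁ ≤ L := by rw [hLdef]; linarith
  have hL : 0 ≤ L := by linarith
  classical
  set τ : ℝ → Ω := fun s => if s ≤ L₁ then σ₁ (b₁ - s) else σ₂ (a₂ + (s - L₁)) with hτdef
  have hτ1 : Set.EqOn τ (σ₁ ∘ fun s => b₁ - s) (Set.Icc 0 L₁) := by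
    intro s hs
    simp only [hτdef, Function.comp_apply, if_pos hs.2]
  have hτL₁ : τ L₁ = z := by
    have h : τ L₁ = σ₁ (b₁ - L₁) := if_pos le_rfl
    rw [h, hL₁def, _root_.sub_sub_cancel, hA₁]
  have hτ2 : Set.EqOn τ (σ₂ ∘ fun s => s + (a₂ - L₁)) (Set.Icc L₁ L) := by
    intro s hs
    by_cases h : s ≤ L₁
    · have hsL : s = L₁ := le_antisymm h hs.1
      rw [hsL, hτL₁]
      show z = σ₂ (L₁ + (a₂ - L₁))
      rw [show L₁ + (a₂ - L₁) = a₂ by ring, hA₂]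
    · show τ s = σ₂ (s + (a₂ - L₁))
      rw [show τ s = σ₂ (a₂ + (s - L₁)) from if_neg h]
      congr 1
      ring
  have hvleft : eVariationOn τ (Set.Icc 0 L₁) = eVariationOn σ₁ (Set.Icc a₁ b₁) := by
    rw [eVariationOn.eq_of_eqOn hτ1,
      eVariationOn.comp_eq_of_antitoneOn σ₁ _
        (fun u _ v _ huv => sub_le_sub_left huv b₁),
      Set.image_const_sub_Icc]
    rw [hL₁def, _root_.sub_sub_cancel, sub_zero]
  have hvright : eVariationOn τ (Set.Icc L₁ L) = eVariationOn σ₂ (Set.Icc a₂ b₂) := by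
    rw [eVariationOn.eq_of_eqOn hτ2,
      eVariationOn.comp_eq_of_monotoneOn σ₂ (fun s => s + (a₂ - L₁))
        (fun u _ v _ huv => by dsimp only; linarith),
      Set.image_add_const_Icc]
    rw [show L₁ + (a₂ - L₁) = a₂ by ring, show L + (a₂ - L₁) = b₂ by rw [hLdef, hL₂def]; ring]
  have hsplit : eVariationOn τ (Set.Icc 0 L₁) + eVariationOn τ (Set.Icc L₁ L)
      = eVariationOn τ (Set.Icc 0 L) := by
    have := eVariationOn.Icc_add_Icc τ (s := (Set.univ : Set ℝ)) hL₁ hL₁L (Set.mem_univ L₁)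
    simpa only [Set.univ_inter] using this
  have hvtot : eVariationOn τ (Set.Icc 0 L) ≤ ENNReal.ofReal (r / 4) := by
    rw [← hsplit, hvleft, hvright]
    calc eVariationOn σ₁ (Set.Icc a₁ b₁) + eVariationOn σ₂ (Set.Icc a₂ b₂)
        ≤ ENNReal.ofReal (r / 8) + ENNReal.ofReal (r / 8) := add_le_add hv₁.le hv₂.le
      _ = ENNReal.ofReal (r / 4) := by
          rw [← ENNReal.ofReal_add (by positivity) (by positivity)]
          congr 1
          ring
  have hvne : eVariationOn τ (Set.Icc 0 L) ≠ ⊤ :=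
    ne_top_of_le_ne_top ENNReal.ofReal_ne_top hvtot
  have hcτ : ContinuousOn τ (Set.Icc 0 L) := by
    rw [hτdef]
    apply ContinuousOn.if
    · intro s hs
      have hfr : s ∈ frontier {a : ℝ | a ≤ L₁} := hs.2
      rw [show {a : ℝ | a ≤ L₁} = Set.Iic L₁ from rfl, frontier_Iic] at hfr
      rw [Set.mem_singleton_iff] at hfr
      subst hfr
      rw [hL₁def, _root_.sub_sub_cancel, hA₁, show a₂ + (b₁ - a₁ - (b₁ - a₁)) = a₂ by ring, hA₂]
    · have hsub : Set.Icc 0 L ∩ closure {a : ℝ | a ≤ L₁} ⊆ Set.Icc 0 L₁ := by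
        intro s hs
        rw [show {a : ℝ | a ≤ L₁} = Set.Iic L₁ from rfl, closure_Iic] at hs
        exact ⟨hs.1.1, hs.2⟩
      refine ContinuousOn.comp hcont₁ ((continuous_const.sub continuous_id).continuousOn) ?_
      intro s hs
      have hs' := hsub hs
      have h1 : s ≤ b₁ - a₁ := by have := hs'.2; rwa [hL₁def] at this
      have h2 : (0:ℝ) ≤ s := hs'.1
      show b₁ - s ∈ Set.Icc a₁ b₁
      rw [Set.mem_Icc]
      constructor <;> linarith
    · have hsub : Set.Icc 0 L ∩ closure {a : ℝ | ¬ a ≤ L₁} ⊆ Set.Icc L₁ L := by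
        intro s hs
        have : closure {a : ℝ | ¬ a ≤ L₁} = Set.Ici L₁ := by
          rw [show {a : ℝ | ¬ a ≤ L₁} = Set.Ioi L₁ by ext u; simp [not_le], closure_Ioi]
        rw [this] at hs
        exact ⟨hs.2, hs.1.2⟩
      refine ContinuousOn.comp hcont₂
        ((continuous_const.add (continuous_id.sub continuous_const)).continuousOn) ?_
      intro s hs
      have hs' := hsub hs
      have h1 : L₁ ≤ s := hs'.1
      have h2 : s ≤ L₁ + (b₂ - a₂) := by
        have := hs'.2; rwa [hLdef, hL₂def] at this
      show a₂ + (s - L₁) ∈ Set.Icc a₂ b₂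
      rw [Set.mem_Icc]
      constructor <;> linarith
  have hτ0 : τ 0 = y₁ := by
    simp only [hτdef, if_pos hL₁, sub_zero, hB₁]
  have hτL : τ L = y₂ := by
    have := hτ2 ⟨hL₁L, le_rfl⟩
    rw [this]
    simp only [Function.comp_apply]
    rw [show L + (a₂ - L₁) = b₂ by rw [hLdef, hL₂def]; ring, hB₂]
  have hcurve : IsCurveIn τ 0 L y₁ y₂ := ⟨hL, hcτ, hτ0, hτL, hvne⟩
  have hδ : ∀ s ∈ Set.Icc 0 L, r / 2 ≤ deltaOmega (τ s) := by
    intro s hs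
    have h1 : edist (τ s) z ≤ ENNReal.ofReal (r / 4) := by
      rw [← hτL₁]
      exact le_trans (eVariationOn.edist_le τ hs ⟨hL₁, hL₁L⟩) hvtot
    have h2 : dist (τ s) z ≤ r / 4 := by
      rw [edist_dist] at h1
      have := (ENNReal.ofReal_le_ofReal_iff (by positivity)).mp h1
      linarith
    have h3 : deltaOmega z ≤ deltaOmega (τ s) + dist (τ s) z := by
      rw [deltaOmega, deltaOmega]
      have h4 := Metric.infDist_le_infDist_add_dist
        (x := (z : Completion Ω)) (y := ((τ s : Ω) : Completion Ω))
        (s := metricBoundary Ω)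
      rwa [Completion.dist_eq, dist_comm] at h4
    rw [← hrdef] at h3
    linarith
  have hlen : qhLength τ 0 L ≤ ENNReal.ofReal (1 / 2) := by
    calc qhLength τ 0 L
        ≤ ENNReal.ofReal (1 / (r / 2)) * eVariationOn τ (Set.Icc 0 L) :=
          qhLength_le_of_delta_lb hL hvne (by positivity) hδ
      _ ≤ ENNReal.ofReal (1 / (r / 2)) * ENNReal.ofReal (r / 4) := by gcongr
      _ = ENNReal.ofReal ((1 / (r / 2)) * (r / 4)) := by
          rw [← ENNReal.ofReal_mul (by positivity)]
      _ = ENNReal.ofReal (1 / 2) := by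
          congr 1
          field_simp
          ring
  have hED : qhEDist y₁ y₂ ≤ ENNReal.ofReal (1 / 2) :=
    le_trans (qhEDist_le_qhLength hcurve) hlen
  rw [qhDist]
  calc (qhEDist y₁ y₂).toReal ≤ (ENNReal.ofReal (1 / 2)).toReal :=
        ENNReal.toReal_mono ENNReal.ofReal_ne_top hED
    _ ≤ 1 := by rw [ENNReal.toReal_ofReal (by norm_num)]; norm_num

lemma no_cluster_in_Omega (hnice : MinimallyNice Ω) {γ : ℝ → Ω} (hγ : IsQHGeodesicRay γ)
    {s : ℕ → ℝ} (hs : Filter.Tendsto s Filter.atTop Filter.atTop) {z : Ω}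
    (hz : Filter.Tendsto (fun n => γ (s n)) Filter.atTop (𝓝 z)) : False := by
  obtain ⟨U, hU, hUq⟩ := exists_nhds_qhDist_le hnice z
  have h1 : ∀ᶠ n in Filter.atTop, γ (s n) ∈ U ∧ 0 ≤ s n :=
    (hz.eventually (show ∀ᶠ y in 𝓝 z, y ∈ U from hU)).and
      (hs.eventually_ge_atTop 0)
  obtain ⟨n, hnU, hn0⟩ := h1.exists
  have h2 : ∀ᶠ m in Filter.atTop, (γ (s m) ∈ U ∧ 0 ≤ s m) ∧ s n + 2 ≤ s m :=
    h1.and (hs.eventually_ge_atTop (s n + 2))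
  obtain ⟨m, ⟨hmU, _⟩, hm2⟩ := h2.exists
  have hgeo : qhDist (γ (s n)) (γ (s m)) = |s n - s m| :=
    hγ (Set.mem_Ici.mpr hn0) (Set.mem_Ici.mpr (by linarith))
  have hle : qhDist (γ (s n)) (γ (s m)) ≤ 1 := hUq _ hnU _ hmU
  rw [hgeo, abs_sub_comm, abs_of_nonneg (by linarith)] at hle
  linarith

end Aux42

/-- **Lemma 4.2.**  Let `(Ω,d)` be a bounded minimally nice space with compact metric
completion, and suppose `(Ω,d)` is quasihyperbolically visible.  If `γ` is a quasihyperbolic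
geodesic ray in `Ω`, then for every sequence `tₙ → ∞` the limit `lim γ(tₙ)` exists in the
metric `d` (and lies in `∂_dΩ`). -/
theorem qhGeodesicRay_limit_exists_along_sequences
    {Ω : Type*} [MetricSpace Ω]
    (hnice : MinimallyNice Ω)
    (hbdd : Bornology.IsBounded (Set.univ : Set Ω))
    (hcpt : CompactSpace (UniformSpace.Completion Ω))
    (hvis : QHVisible Ω)
    (γ : ℝ → Ω) (hγ : IsQHGeodesicRay γ)
    (t : ℕ → ℝ) (ht : Filter.Tendsto t Filter.atTop Filter.atTop) :
    ∃ x ∈ metricBoundary Ω,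
      Filter.Tendsto (fun n => ((γ (t n) : Ω) : UniformSpace.Completion Ω))
        Filter.atTop (nhds x) := by
    classical
  haveI : CompactSpace (UniformSpace.Completion Ω) := hcpt
  set f : ℕ → UniformSpace.Completion Ω :=
    fun n => ((γ (t n) : Ω) : UniformSpace.Completion Ω) with hfdef
  have claim1 : ∀ φ : ℕ → ℕ, StrictMono φ → ∀ p,
      Filter.Tendsto (f ∘ φ) Filter.atTop (𝓝 p) → p ∈ metricBoundary Ω := by
    intro φ hφ p hp
    by_contra hpm
    rw [metricBoundary, Set.mem_compl_iff, not_not] at hpm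
    obtain ⟨z, rfl⟩ := hpm
    have hconv : Filter.Tendsto (fun n => γ (t (φ n))) Filter.atTop (𝓝 z) := by
      rw [(UniformSpace.Completion.isUniformInducing_coe Ω).isInducing.tendsto_nhds_iff]
      exact hp
    exact no_cluster_in_Omega hnice hγ (ht.comp hφ.tendsto_atTop) hconv
  obtain ⟨p, φ, hφ, hfp⟩ := CompactSpace.tendsto_subseq f
  have hpB := claim1 φ hφ p hfp
  refine ⟨p, hpB, ?_⟩
  show Filter.Tendsto f Filter.atTop (𝓝 p)
  by_contra hnt
  rw [Metric.tendsto_atTop] at hnt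
  push_neg at hnt
  obtain ⟨ε, hε, hfreq⟩ := hnt
  obtain ⟨ψ, hψ, hψd⟩ := Filter.extraction_of_frequently_atTop
    (Filter.frequently_atTop.mpr hfreq)
  obtain ⟨q, _, ρ, hρ, hq⟩ := isCompact_univ.tendsto_subseq
    (fun n => Set.mem_univ ((f ∘ ψ) n))
  have hq' : Filter.Tendsto (f ∘ (ψ ∘ ρ)) Filter.atTop (𝓝 q) := hq
  have hqB := claim1 (ψ ∘ ρ) (hψ.comp hρ) q hq'
  have hpq : p ≠ q := by
    intro h
    subst h
    obtain ⟨N, hN⟩ := (Metric.tendsto_atTop.mp hq') ε hε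
    exact absurd (hN N le_rfl) (not_lt.mpr (hψd (ρ N)))
  obtain ⟨K, hKc, hKvis⟩ := hvis p q hpB hqB hpq
  have hx : Filter.Tendsto
      (fun n => ((γ (t (φ n)) : Ω) : UniformSpace.Completion Ω)) Filter.atTop (𝓝 p) := hfp
  have hy : Filter.Tendsto
      (fun n => ((γ (t (ψ (ρ n))) : Ω) : UniformSpace.Completion Ω)) Filter.atTop (𝓝 q) := hq'
  have hposx : ∀ᶠ n in Filter.atTop, 0 ≤ t (φ n) :=
    (ht.comp hφ.tendsto_atTop).eventually_ge_atTop 0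
  have hposy : ∀ᶠ n in Filter.atTop, 0 ≤ t (ψ (ρ n)) :=
    (ht.comp (hψ.comp hρ).tendsto_atTop).eventually_ge_atTop 0
  obtain ⟨N₀, hN₀⟩ := Filter.eventually_atTop.mp (hposx.and hposy)
  have key : ∀ n, N₀ ≤ n → ∃ s, s ∈ Set.Icc (min (t (φ n)) (t (ψ (ρ n))))
      (max (t (φ n)) (t (ψ (ρ n)))) ∧ γ s ∈ K := by
    intro n hn
    obtain ⟨h1, h2⟩ := hN₀ n hn
    rcases le_total (t (φ n)) (t (ψ (ρ n))) with hle | hle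
    · have hseg : IsQHGeodesicSeg γ (t (φ n)) (t (ψ (ρ n)))
          (γ (t (φ n))) (γ (t (ψ (ρ n)))) :=
        ⟨hle, rfl, rfl, fun u hu v hv =>
          hγ (Set.mem_Ici.mpr (le_trans h1 hu.1)) (Set.mem_Ici.mpr (le_trans h1 hv.1))⟩
      obtain ⟨s, hs, hsK⟩ := hKvis _ _ hx hy n γ _ _ hseg
      exact ⟨s, by rw [min_eq_left hle, max_eq_right hle]; exact hs, hsK⟩
    · have hseg : IsQHGeodesicSeg (fun u => γ (t (ψ (ρ n)) + t (φ n) - u))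
          (t (ψ (ρ n))) (t (φ n)) (γ (t (φ n))) (γ (t (ψ (ρ n)))) := by
        refine ⟨hle, ?_, ?_, ?_⟩
        · show γ (t (ψ (ρ n)) + t (φ n) - t (ψ (ρ n))) = γ (t (φ n))
          rw [show t (ψ (ρ n)) + t (φ n) - t (ψ (ρ n)) = t (φ n) by ring]
        · show γ (t (ψ (ρ n)) + t (φ n) - t (φ n)) = γ (t (ψ (ρ n)))
          rw [show t (ψ (ρ n)) + t (φ n) - t (φ n) = t (ψ (ρ n)) by ring]
        · intro u hu v hv
          have hu' : (0:ℝ) ≤ t (ψ (ρ n)) + t (φ n) - u := by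
            have := hu.2; linarith
          have hv' : (0:ℝ) ≤ t (ψ (ρ n)) + t (φ n) - v := by
            have := hv.2; linarith
          show qhDist (γ (t (ψ (ρ n)) + t (φ n) - u)) (γ (t (ψ (ρ n)) + t (φ n) - v)) = |u - v|
          rw [hγ (Set.mem_Ici.mpr hu') (Set.mem_Ici.mpr hv'),
            show t (ψ (ρ n)) + t (φ n) - u - (t (ψ (ρ n)) + t (φ n) - v) = v - u by ring,
            abs_sub_comm]
      obtain ⟨s, hs, hsK⟩ := hKvis _ _ hx hy n _ _ _ hseg
      refine ⟨t (ψ (ρ n)) + t (φ n) - s, ?_, hsK⟩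
      rw [min_eq_right hle, max_eq_left hle]
      exact ⟨by have := hs.2; linarith, by have := hs.1; linarith⟩
  choose! S hS1 hS2 using key
  have hSK : ∀ k : ℕ, γ (S (k + N₀)) ∈ K := fun k => hS2 (k + N₀) (Nat.le_add_left _ _)
  have hStend : Filter.Tendsto (fun k => S (k + N₀)) Filter.atTop Filter.atTop := by
    rw [Filter.tendsto_atTop]
    intro C
    have hx' : ∀ᶠ k in Filter.atTop, C ≤ t (φ (k + N₀)) :=
      ((ht.comp hφ.tendsto_atTop).comp (Filter.tendsto_add_atTop_nat N₀)).eventually_ge_atTop C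
    have hy' : ∀ᶠ k in Filter.atTop, C ≤ t (ψ (ρ (k + N₀))) :=
      ((ht.comp (hψ.comp hρ).tendsto_atTop).comp
        (Filter.tendsto_add_atTop_nat N₀)).eventually_ge_atTop C
    filter_upwards [hx', hy'] with k hk1 hk2
    exact le_trans (le_min hk1 hk2) (hS1 (k + N₀) (Nat.le_add_left _ _)).1
  obtain ⟨z, _, ρ₂, hρ₂, hzt⟩ := hKc.tendsto_subseq hSK
  exact no_cluster_in_Omega hnice hγ (hStend.comp hρ₂.tendsto_atTop) hzt
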